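/- Let A be a Poisson algebra over a field k of characteristic zero, and let I be a Poisson ideal. Then every minimal prime ideal over I is a Poisson ideal. -/

import Mathlib

universe u v

/-- A Poisson bracket on a commutative `k`-algebra `A`. -/
structure IsPoissonBracket (k : Type u) {A : Type v} [CommRing k] [CommRing A] [Algebra k A]
    (B : A → A → A) : Prop where
  add_left : ∀ a b c : A, B (a + b) c = B a c + B b c
  smul_left : ∀ (c : k) (a b : A), B (c • a) b = c • B a b
  antisymm : ∀ a b : A, B a b = - B b a
  jacobi : ∀ a b c : A, B a (B b c) + B b (B c a) + B c (B a b) = 0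
  leibniz : ∀ a b c : A, B (a * b) c = B a c * b + a * B b c

private lemma poisson_aux_asc (r m : ℕ) :
    (r + 1).ascFactorial (m + 1) = (r + 1) * ((r + 1 + 1).ascFactorial m) := by
  rw [Nat.succ_ascFactorial, Nat.ascFactorial_succ]

/-- Key iterated-derivative computation:
`D^[m] (s * a^(r+m)) ≡ (r+1)(r+2)⋯(r+m) • s * a^r * (D a)^m  mod (a^(r+1))`. -/
private lemma poisson_iterate_key {A : Type v} [CommRing A] (D : A → A)
    (hadd : ∀ x y : A, D (x + y) = D x + D y)
    (hmul : ∀ x y : A, D (x * y) = D x * y + x * D y)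
    (a s : A) :
    ∀ (m r : ℕ),
      D^[m] (s * a ^ (r + m)) - ((r + 1).ascFactorial m : A) * (s * a ^ r * (D a) ^ m)
        ∈ Ideal.span {a ^ (r + 1)} := by
  have hzero : D 0 = 0 := by
    have h := hadd 0 0
    rw [add_zero] at h
    exact right_eq_add.mp h
  have hone : D 1 = 0 := by
    have h := hmul 1 1
    rw [one_mul, one_mul, mul_one] at h
    exact right_eq_add.mp h
  have hconst : ∀ n : ℕ, D ((n : A)) = 0 := by
    intro n
    induction n with
    | zero => simpa using hzero
    | succ n ih => rw [Nat.cast_succ, hadd, ih, hone, add_zero]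
  have hpow : ∀ (x : A) (j : ℕ), D (x ^ (j + 1)) = ((j + 1 : ℕ) : A) * (x ^ j * D x) := by
    intro x j
    induction j with
    | zero => simp
    | succ j ih =>
      rw [pow_succ, hmul, ih]
      push_cast
      ring
  intro m
  induction m with
  | zero =>
    intro r
    simp
  | succ m ih =>
    intro r
    obtain ⟨y, hy⟩ := Ideal.mem_span_singleton'.mp (ih (r + 1))
    have hy' : D^[m] (s * a ^ (r + (m + 1)))
        = ((r + 1 + 1).ascFactorial m : A) * (s * a ^ (r + 1) * (D a) ^ m) + y * a ^ (r + 1 + 1) := by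
      have hr : r + (m + 1) = r + 1 + m := by omega
      rw [hr]
      linear_combination -hy
    rw [Function.iterate_succ_apply', hy', hadd, hmul, hmul, hmul, hmul, hpow a r,
      hpow a (r + 1), hconst]
    refine Ideal.mem_span_singleton'.mpr
      ⟨((r + 1 + 1).ascFactorial m : A) * (D s * (D a) ^ m + s * D ((D a) ^ m)) + D y * a
        + y * (((r + 1 + 1 : ℕ) : A) * D a), ?_⟩
    have hcoef : (((r + 1).ascFactorial (m + 1) : ℕ) : A)
        = ((r + 1 : ℕ) : A) * (((r + 1 + 1).ascFactorial m : ℕ) : A) := by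
      rw [poisson_aux_asc]
      push_cast
      ring
    rw [hcoef]
    push_cast
    ring

theorem minimal_prime_over_poisson_ideal_is_poisson {k : Type u} {A : Type v} [Field k]
    [CharZero k] [CommRing A] [Algebra k A] (B : A → A → A) (hB : IsPoissonBracket k B)
    (I : Ideal A) (hI : ∀ f ∈ I, ∀ g : A, B f g ∈ I)
    (P : Ideal A) (hP : P ∈ I.minimalPrimes) :
    ∀ f ∈ P, ∀ g : A, B f g ∈ P := by
  intro f hf g
  have hPp : P.IsPrime := hP.1.1
  have hIP : I ≤ P := hP.1.2
  -- the derivation `D x = B x g`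
  set D : A → A := fun x => B x g with hD
  have hadd : ∀ x y : A, D (x + y) = D x + D y := fun x y => hB.add_left x y g
  have hmul : ∀ x y : A, D (x * y) = D x * y + x * D y := fun x y => hB.leibniz x y g
  have hDI : ∀ x ∈ I, D x ∈ I := fun x hx => hI x hx g
  have hiter : ∀ (m : ℕ) (x : A), x ∈ I → D^[m] x ∈ I := by
    intro m
    induction m with
    | zero => intro x hx; simpa using hx
    | succ m ih =>
      intro x hx
      rw [Function.iterate_succ_apply']
      exact hDI _ (ih x hx)
  -- Step 1: find `s ∉ P` and `n` with `s * f ^ n ∈ I`.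
  have hone : (1 : A) ∉ P := fun h => hPp.ne_top (Ideal.eq_top_of_isUnit_mem P h isUnit_one)
  let T : Submonoid A :=
    { carrier := {x | ∃ s, s ∉ P ∧ ∃ n : ℕ, x = s * f ^ n}
      one_mem' := ⟨1, hone, 0, by simp⟩
      mul_mem' := by
        rintro x y ⟨s, hs, m, rfl⟩ ⟨t, ht, n, rfl⟩
        exact ⟨s * t, fun h => ((hPp.mem_or_mem h).elim hs ht), m + n, by ring⟩ }
  have hstep : ∃ s, s ∉ P ∧ ∃ n : ℕ, s * f ^ n ∈ I := by
    by_contra hcon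
    push_neg at hcon
    have hdis : Disjoint (I : Set A) (T : Set A) := by
      rw [Set.disjoint_left]
      rintro x hx ⟨s, hs, n, rfl⟩
      exact hcon s hs n hx
    obtain ⟨Q, hQp, hIQ, hQdis⟩ := Ideal.exists_le_prime_disjoint I T hdis
    have hQP : Q ≤ P := by
      intro x hx
      by_contra hxP
      exact Set.disjoint_left.mp hQdis hx ⟨x, hxP, 0, by simp⟩
    have hPQ : P ≤ Q := hP.2 ⟨hQp, hIQ⟩ hQP
    exact Set.disjoint_left.mp hQdis (hPQ hf) ⟨1, hone, 1, by simp⟩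
  obtain ⟨s, hs, n, hsf⟩ := hstep
  -- Step 2: apply the key lemma with `r = 0`, `m = n`.
  have hkey := poisson_iterate_key D hadd hmul f s n 0
  simp only [zero_add, pow_zero, mul_one, pow_one] at hkey
  -- `D^[n] (s * f ^ n) ∈ I ⊆ P`
  have h1 : D^[n] (s * f ^ n) ∈ P := hIP (hiter n _ hsf)
  have h2 : D^[n] (s * f ^ n) - ((1 : ℕ).ascFactorial n : A) * (s * (D f) ^ n) ∈ P := by
    have : Ideal.span {f} ≤ P := (Ideal.span_le).mpr (by simpa using hf)
    exact this hkey
  have h3 : ((1 : ℕ).ascFactorial n : A) * (s * (D f) ^ n) ∈ P := by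
    have := P.sub_mem h1 h2
    simpa using this
  -- the coefficient is a unit since `A` is a `k`-algebra with `char k = 0`
  have hN : ((1 : ℕ).ascFactorial n : A) ∉ P := by
    intro hmem
    have hNk : (((1 : ℕ).ascFactorial n : ℕ) : k) ≠ 0 := by
      rw [Nat.one_ascFactorial]
      exact_mod_cast (Nat.factorial_pos n).ne'
    exact hPp.ne_top (Ideal.eq_top_of_isUnit_mem P hmem
      (by
        have : ((1 : ℕ).ascFactorial n : A) = algebraMap k A (((1 : ℕ).ascFactorial n : ℕ) : k) := by
          rw [map_natCast]
        rw [this]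
        exact (IsUnit.map (algebraMap k A) (isUnit_iff_ne_zero.mpr hNk))))
  have h4 : s * (D f) ^ n ∈ P := (hPp.mem_or_mem h3).resolve_left hN
  have h5 : (D f) ^ n ∈ P := (hPp.mem_or_mem h4).resolve_left hs
  exact hPp.mem_of_pow_mem n h5
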